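/- Let P be an invertible matrix over the integers (i.e., P ∈ GL_ℓ(ℤ)). Then all eigenvalues of P are roots of unity if and only if all eigenvalues of P have absolute value 1. -/

import Mathlib

open IntermediateField in
/-- For an invertible integer matrix `P` (i.e. `P ∈ GL_ℓ(ℤ)`),
all complex eigenvalues of `P` are roots of unity iff they all have absolute value 1. -/
theorem quasiUnipotent_iff_abs_eigenvalues_one (ℓ : ℕ)
    (P : Matrix (Fin ℓ) (Fin ℓ) ℤ) (hP : IsUnit P.det) :
    (∀ z : ℂ, ((P.map (Int.cast : ℤ → ℂ)).charpoly).IsRoot z → ∃ n : ℕ, 0 < n ∧ z ^ n = 1) ↔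
    (∀ z : ℂ, ((P.map (Int.cast : ℤ → ℂ)).charpoly).IsRoot z → ‖z‖ = 1) := by
  have hcp : (P.map (Int.cast : ℤ → ℂ)).charpoly = P.charpoly.map (Int.castRingHom ℂ) :=
    Matrix.charpoly_map P (Int.castRingHom ℂ)
  constructor
  · intro h z hz
    obtain ⟨n, hn, hzn⟩ := h z hz
    exact Complex.norm_eq_one_of_pow_eq_one hzn hn.ne'
  · intro h z hz
    have hroot : Polynomial.eval₂ (Int.castRingHom ℂ) z P.charpoly = 0 := by
      rw [hcp] at hz
      simpa [Polynomial.eval₂_eq_eval_map] using hz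
    have hzint : IsIntegral ℤ z := ⟨P.charpoly, P.charpoly_monic, hroot⟩
    have hzintQ : IsIntegral ℚ z := hzint.tower_top
    let K := ℚ⟮z⟯
    haveI : FiniteDimensional ℚ K :=
      IntermediateField.adjoin.finiteDimensional hzintQ
    haveI : NumberField K := ⟨⟩
    set x : K := IntermediateField.AdjoinSimple.gen ℚ z with hx
    have hxz : (algebraMap K ℂ) x = z := rfl
    have hcomp : ∀ φ : K →+* ℂ, φ.comp (Int.castRingHom K) = Int.castRingHom ℂ := by
      intro φ; ext1; simp
    have hxroot : Polynomial.eval₂ (Int.castRingHom K) x P.charpoly = 0 := by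
      apply (algebraMap K ℂ).injective
      rw [map_zero, Polynomial.hom_eval₂, hcomp, hxz, hroot]
    have hxint : IsIntegral ℤ x := ⟨P.charpoly, P.charpoly_monic, hxroot⟩
    have hnorm : ∀ φ : K →+* ℂ, ‖φ x‖ = 1 := by
      intro φ
      have : Polynomial.eval₂ (Int.castRingHom ℂ) (φ x) P.charpoly = 0 := by
        rw [← hcomp φ, ← Polynomial.hom_eval₂, hxroot, map_zero]
      have := h (φ x) (by rw [hcp]; simpa [Polynomial.IsRoot,
        Polynomial.eval₂_eq_eval_map] using this)
      exact this
    obtain ⟨n, hn, hxn⟩ := NumberField.Embeddings.pow_eq_one_of_norm_eq_one K ℂ hxint hnorm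
    refine ⟨n, hn, ?_⟩
    rw [← hxz, ← map_pow, hxn, map_one]
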